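/- Let x_1 ≠ x_2 ∈ ℝ^d and n = 2. The mode-collapse point Ȳ = (x_1, x_1) is a sub-optimal strict local minimum of Y ↦ φ_JS(Y, X): there is ε > 0 such that φ_JS(Y, X) > φ_JS(Ȳ, X) for every Y ≠ Ȳ with ‖Y − Ȳ‖ < ε, and φ_JS(Ȳ, X) = (1/4)·log(1/3) + (1/2)·log(2/3) is strictly greater than the global minimum value −log 2. -/

import Mathlib

open scoped BigOperators

set_option maxHeartbeats 1000000

noncomputable def sigFn (t : ℝ) : ℝ := 1 / (1 + Real.exp (-t))

lemma sigFn_cont : Continuous sigFn := by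
  apply Continuous.div continuous_const
  · exact continuous_const.add (Real.continuous_exp.comp continuous_neg)
  · intro t
    have := Real.exp_pos (-t)
    positivity

lemma sigFn_mem (t : ℝ) : sigFn t ∈ Set.Ioo (0:ℝ) 1 := by
  have h := Real.exp_pos (-t)
  constructor
  · unfold sigFn; positivity
  · unfold sigFn
    rw [div_lt_one (by linarith)]
    linarith

lemma sigFn_logit {v : ℝ} (h : v ∈ Set.Ioo (0:ℝ) 1) :
    sigFn (Real.log (v / (1 - v))) = v := by
  obtain ⟨h0, h1⟩ := h
  have hv1 : (0:ℝ) < 1 - v := by linarith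
  unfold sigFn
  rw [← Real.log_inv, Real.exp_log (by positivity)]
  field_simp
  ring

lemma interp {d k : ℕ} (p : Fin k → EuclideanSpace ℝ (Fin d))
    (hp : Function.Injective p)
    (v : Fin k → ℝ) (hv : ∀ i, v i ∈ Set.Ioo (0:ℝ) 1) :
    ∃ D : EuclideanSpace ℝ (Fin d) → ℝ, Continuous D ∧
      (∀ u, D u ∈ Set.Ioo (0:ℝ) 1) ∧ ∀ i, D (p i) = v i := by
  set c : Fin k → ℝ := fun i =>
    Real.log (v i / (1 - v i)) / ∏ j ∈ Finset.univ.erase i, dist (p i) (p j) with hc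
  refine ⟨fun u => sigFn (∑ i, c i * ∏ j ∈ Finset.univ.erase i, dist u (p j)),
    ?_, fun u => sigFn_mem _, ?_⟩
  · apply sigFn_cont.comp
    apply continuous_finset_sum
    intro i _
    apply continuous_const.mul
    apply continuous_finset_prod
    intro j _
    exact Continuous.dist continuous_id continuous_const
  · intro i
    have hsum : (∑ j, c j * ∏ l ∈ Finset.univ.erase j, dist (p i) (p l))
        = c i * ∏ l ∈ Finset.univ.erase i, dist (p i) (p l) := by
      rw [Finset.sum_eq_single i]
      · intro j _ hji
        have : (∏ l ∈ Finset.univ.erase j, dist (p i) (p l)) = 0 :=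
          Finset.prod_eq_zero (Finset.mem_erase.mpr ⟨fun h => hji h.symm, Finset.mem_univ i⟩)
            (dist_self (p i))
        rw [this, mul_zero]
      · intro h; exact absurd (Finset.mem_univ i) h
    have hprod : (∏ l ∈ Finset.univ.erase i, dist (p i) (p l)) ≠ 0 := by
      apply Finset.prod_ne_zero_iff.mpr
      intro l hl
      have : p i ≠ p l := fun h => (Finset.mem_erase.mp hl).1 (hp h).symm
      exact ne_of_gt (dist_pos.mpr this)
    show sigFn (∑ j, c j * ∏ l ∈ Finset.univ.erase j, dist (p i) (p l)) = v i
    rw [hsum]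
    simp only [hc]
    rw [div_mul_cancel₀ _ hprod]
    exact sigFn_logit (hv i)

-- log arithmetic helpers
lemma log13 : Real.log (1/3 : ℝ) = -Real.log 3 := by
  rw [one_div, Real.log_inv]

lemma log12 : Real.log (1/2 : ℝ) = -Real.log 2 := by
  rw [one_div, Real.log_inv]

lemma log23 : Real.log (2/3 : ℝ) = Real.log 2 - Real.log 3 :=
  Real.log_div two_ne_zero three_ne_zero

lemma log45 : Real.log (4/5 : ℝ) = 2*Real.log 2 - Real.log 5 := by
  rw [Real.log_div (by norm_num) (by norm_num),
    show (4:ℝ) = 2^2 by norm_num, Real.log_pow]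
  push_cast; ring

lemma log3lt : Real.log 3 < 2 * Real.log 2 := by
  have h := Real.log_lt_log (by norm_num : (0:ℝ) < 3) (by norm_num : (3:ℝ) < 4)
  have h4 : Real.log (4:ℝ) = 2*Real.log 2 := by
    rw [show (4:ℝ) = 2^2 by norm_num, Real.log_pow]; push_cast; ring
  linarith

lemma log2527 : 2*Real.log 5 < 3*Real.log 3 := by
  have h := Real.log_lt_log (by norm_num : (0:ℝ) < 25) (by norm_num : (25:ℝ) < 27)
  have h25 : Real.log (25:ℝ) = 2*Real.log 5 := by
    rw [show (25:ℝ) = 5^2 by norm_num, Real.log_pow]; push_cast; ring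
  have h27 : Real.log (27:ℝ) = 3*Real.log 3 := by
    rw [show (27:ℝ) = 3^3 by norm_num, Real.log_pow]; push_cast; ring
  linarith

lemma log6251728 : 4*Real.log 5 < 6*Real.log 2 + 3*Real.log 3 := by
  have h := Real.log_lt_log (by norm_num : (0:ℝ) < 625) (by norm_num : (625:ℝ) < 1728)
  have h625 : Real.log (625:ℝ) = 4*Real.log 5 := by
    rw [show (625:ℝ) = 5^4 by norm_num, Real.log_pow]; push_cast; ring
  have h1728 : Real.log (1728:ℝ) = 6*Real.log 2 + 3*Real.log 3 := by
    rw [show (1728:ℝ) = 2^6 * 3^3 by norm_num,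
      Real.log_mul (by positivity) (by positivity), Real.log_pow, Real.log_pow]
    push_cast; ring
  linarith

lemma inj2 {α} {a b : α} (hab : a ≠ b) : Function.Injective ![a, b] := by
  intro i j h
  fin_cases i <;> fin_cases j <;> simp_all

lemma inj3 {α} {a b c : α} (hab : a ≠ b) (hac : a ≠ c) (hbc : b ≠ c) :
    Function.Injective ![a, b, c] := by
  intro i j h
  fin_cases i <;> fin_cases j <;> simp_all

lemma inj4 {α} {a b c e : α} (hab : a ≠ b) (hac : a ≠ c) (hae : a ≠ e)
    (hbc : b ≠ c) (hbe : b ≠ e) (hce : c ≠ e) :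
    Function.Injective ![a, b, c, e] := by
  intro i j h
  fin_cases i <;> fin_cases j <;> simp_all

/-- The JS-GAN loss. -/
noncomputable def phiJS {d n : ℕ} (x Y : Fin n → EuclideanSpace ℝ (Fin d)) : ℝ :=
  sSup {s : ℝ | ∃ D : EuclideanSpace ℝ (Fin d) → ℝ, Continuous D ∧
    (∀ u, D u ∈ Set.Ioo (0 : ℝ) 1) ∧
    s = (1 / (2 * (n : ℝ))) * ∑ i, (Real.log (D (x i)) + Real.log (1 - D (Y i)))}

theorem stmt7 {d : ℕ} (hd : 1 ≤ d)
    (x : Fin 2 → EuclideanSpace ℝ (Fin d)) (hx : x 0 ≠ x 1) :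
    (∀ Y : Fin 2 → EuclideanSpace ℝ (Fin d), -Real.log 2 ≤ phiJS x Y) ∧
    phiJS x (fun _ => x 0)
      = (1 / 4) * Real.log (1 / 3) + (1 / 2) * Real.log (2 / 3) ∧
    -Real.log 2 < phiJS x (fun _ => x 0) ∧
    ∃ ε > 0, ∀ Y : Fin 2 → EuclideanSpace ℝ (Fin d),
      Y ≠ (fun _ => x 0) → dist Y (fun _ => x 0) < ε →
      phiJS x (fun _ => x 0) < phiJS x Y := by
  classical
  set S : (Fin 2 → EuclideanSpace ℝ (Fin d)) → Set ℝ := fun Y =>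
    {s : ℝ | ∃ D : EuclideanSpace ℝ (Fin d) → ℝ, Continuous D ∧
      (∀ u, D u ∈ Set.Ioo (0 : ℝ) 1) ∧
      s = (1 / (2 * ((2:ℕ) : ℝ))) * ∑ i, (Real.log (D (x i)) + Real.log (1 - D (Y i)))}
    with hS
  have hphi : ∀ Y, phiJS x Y = sSup (S Y) := fun Y => rfl
  -- membership helper
  have elem : ∀ (Y : Fin 2 → EuclideanSpace ℝ (Fin d))
      (D : EuclideanSpace ℝ (Fin d) → ℝ), Continuous D →
      (∀ u, D u ∈ Set.Ioo (0:ℝ) 1) →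
      ((1/4 : ℝ) * ((Real.log (D (x 0)) + Real.log (1 - D (Y 0)))
        + (Real.log (D (x 1)) + Real.log (1 - D (Y 1))))) ∈ S Y := by
    intro Y D hc hr
    refine ⟨D, hc, hr, ?_⟩
    rw [Fin.sum_univ_two]; norm_num
  -- bounded above by 0
  have hbdd : ∀ Y, BddAbove (S Y) := by
    intro Y
    refine ⟨0, ?_⟩
    rintro s ⟨D, hc, hr, rfl⟩
    have hsum : (∑ i : Fin 2, (Real.log (D (x i)) + Real.log (1 - D (Y i)))) ≤ 0 := by
      apply Finset.sum_nonpos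
      intro i _
      have h1 := hr (x i); have h2 := hr (Y i)
      have := Real.log_nonpos h1.1.le h1.2.le
      have := Real.log_nonpos (by linarith [h2.2] : (0:ℝ) ≤ 1 - D (Y i))
        (by linarith [h2.1] : 1 - D (Y i) ≤ 1)
      linarith
    exact mul_nonpos_iff.mpr (Or.inl ⟨by norm_num, hsum⟩)
  -- constant 1/2 discriminator : -log 2 ∈ S Y
  have hne : ∀ Y, (-(Real.log 2)) ∈ S Y := by
    intro Y
    refine ⟨fun _ => 1/2, continuous_const, fun u => by norm_num, ?_⟩
    rw [Fin.sum_univ_two]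
    rw [show (1:ℝ) - 1/2 = 1/2 by norm_num, log12]
    push_cast; ring
  have part1 : ∀ Y, -Real.log 2 ≤ phiJS x Y := by
    intro Y; rw [hphi]; exact le_csSup (hbdd Y) (hne Y)
  -- Part 2
  have part2 : phiJS x (fun _ => x 0)
      = (1 / 4) * Real.log (1 / 3) + (1 / 2) * Real.log (2 / 3) := by
    rw [hphi]
    apply le_antisymm
    · apply csSup_le ⟨_, hne _⟩
      rintro s ⟨D, hc, hr, rfl⟩
      rw [Fin.sum_univ_two]
      have ha := hr (x 0); have hb := hr (x 1)
      set a := D (x 0); set b := D (x 1)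
      have hlogb : Real.log b ≤ 0 := Real.log_nonpos hb.1.le hb.2.le
      have h1 : Real.log a + 2*Real.log (1-a) = Real.log (a * (1-a)^2) := by
        rw [Real.log_mul (ne_of_gt ha.1) (by nlinarith [ha.2] : (1-a)^2 ≠ 0),
          Real.log_pow]
        push_cast; ring
      have h2 : Real.log (1/3 : ℝ) + 2*Real.log (2/3 : ℝ) = Real.log (4/27 : ℝ) := by
        rw [show (4:ℝ)/27 = (1/3)*(2/3)^2 by norm_num,
          Real.log_mul (by norm_num) (by norm_num), Real.log_pow]
        push_cast; ring
      have h3 : a * (1-a)^2 ≤ 4/27 := by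
        nlinarith [mul_nonneg (sq_nonneg (3*a-1)) (by linarith [ha.2] : (0:ℝ) ≤ 4 - 3*a)]
      have h4 : Real.log (a * (1-a)^2) ≤ Real.log (4/27 : ℝ) :=
        Real.log_le_log (mul_pos ha.1 (pow_pos (by linarith [ha.2] : (0:ℝ) < 1 - a) 2)) h3
      have hcoef : (1 / (2 * ((2:ℕ) : ℝ))) = (1/4 : ℝ) := by norm_num
      rw [hcoef]
      linarith
    · rw [le_csSup_iff (hbdd _) ⟨_, hne _⟩]
      intro b hb
      by_contra hblt
      push_neg at hblt
      set vv := (1 / 4) * Real.log (1/3 : ℝ) + (1 / 2) * Real.log (2/3 : ℝ) with hvv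
      set t := Real.exp (2*(b - vv)) with htdef
      have ht : t ∈ Set.Ioo (0:ℝ) 1 :=
        ⟨Real.exp_pos _, Real.exp_lt_one_iff.mpr (by linarith)⟩
      obtain ⟨D, hc, hr, hD⟩ := interp x
        (fun i j h => by fin_cases i <;> fin_cases j <;> simp_all)
        ![1/3, t] (fun i => by fin_cases i <;> simp <;> [norm_num; exact ht])
      have hmem := elem (fun _ => x 0) D hc hr
      have hle := hb hmem
      have e0 : D (x 0) = 1/3 := by simpa using hD 0
      have e1 : D (x 1) = t := by simpa using hD 1
      rw [e0, e1, show (1:ℝ) - 1/3 = 2/3 by norm_num] at hle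
      rw [htdef, Real.log_exp] at hle
      rw [hvv] at hle hblt
      linarith
  -- Part 3
  have part3 : -Real.log 2 < phiJS x (fun _ => x 0) := by
    rw [part2, log13, log23]
    linarith [log3lt]
  refine ⟨part1, part2, part3, ?_⟩
  -- Part 4
  refine ⟨dist (x 0) (x 1), dist_pos.mpr hx, ?_⟩
  intro Y hYne hYd
  have hd0 : dist (Y 0) (x 0) < dist (x 0) (x 1) :=
    lt_of_le_of_lt (dist_le_pi_dist Y (fun _ => x 0) 0) hYd
  have hd1 : dist (Y 1) (x 0) < dist (x 0) (x 1) :=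
    lt_of_le_of_lt (dist_le_pi_dist Y (fun _ => x 0) 1) hYd
  have hY0x1 : Y 0 ≠ x 1 := by
    intro h; rw [h, dist_comm] at hd0; exact lt_irrefl _ hd0
  have hY1x1 : Y 1 ≠ x 1 := by
    intro h; rw [h, dist_comm] at hd1; exact lt_irrefl _ hd1
  rw [part2, hphi]
  have key : ∀ s ∈ S Y,
      (1 / 4) * Real.log (1/3 : ℝ) + (1 / 2) * Real.log (2/3 : ℝ) < s →
      (1 / 4) * Real.log (1/3 : ℝ) + (1 / 2) * Real.log (2/3 : ℝ) < sSup (S Y) :=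
    fun s hs hlt => lt_of_lt_of_le hlt (le_csSup (hbdd Y) hs)
  by_cases h0 : Y 0 = x 0
  · by_cases h1 : Y 1 = x 0
    · exact absurd (funext fun i => by fin_cases i <;> assumption) hYne
    · -- Y 0 = x 0, Y 1 ≠ x 0 : points x0, x1, Y1, values 1/2, 4/5, 1/5
      obtain ⟨D, hc, hr, hD⟩ := interp ![x 0, x 1, Y 1]
        (inj3 hx (fun h => h1 h.symm) (fun h => hY1x1 h.symm))
        ![1/2, 4/5, 1/5] (fun i => by fin_cases i <;> norm_num)
      apply key _ (elem Y D hc hr)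
      have e0 : D (x 0) = 1/2 := by simpa using hD 0
      have e1 : D (x 1) = 4/5 := by simpa using hD 1
      have e2 : D (Y 1) = 1/5 := by simpa using hD 2
      rw [h0, e0, e1, e2, show (1:ℝ) - 1/2 = 1/2 by norm_num,
        show (1:ℝ) - 1/5 = 4/5 by norm_num, log12, log45, log13, log23]
      linarith [log2527]
  · by_cases h1 : Y 1 = x 0
    · obtain ⟨D, hc, hr, hD⟩ := interp ![x 0, x 1, Y 0]
        (inj3 hx (fun h => h0 h.symm) (fun h => hY0x1 h.symm))
        ![1/2, 4/5, 1/5] (fun i => by fin_cases i <;> norm_num)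
      apply key _ (elem Y D hc hr)
      have e0 : D (x 0) = 1/2 := by simpa using hD 0
      have e1 : D (x 1) = 4/5 := by simpa using hD 1
      have e2 : D (Y 0) = 1/5 := by simpa using hD 2
      rw [h1, e0, e1, e2, show (1:ℝ) - 1/2 = 1/2 by norm_num,
        show (1:ℝ) - 1/5 = 4/5 by norm_num, log12, log45, log13, log23]
      linarith [log2527]
    · by_cases hyy : Y 1 = Y 0
      · -- three points x0, x1, Y0, values 4/5, 4/5, 1/5
        obtain ⟨D, hc, hr, hD⟩ := interp ![x 0, x 1, Y 0]
          (inj3 hx (fun h => h0 h.symm) (fun h => hY0x1 h.symm))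
          ![4/5, 4/5, 1/5] (fun i => by fin_cases i <;> norm_num)
        apply key _ (elem Y D hc hr)
        have e0 : D (x 0) = 4/5 := by simpa using hD 0
        have e1 : D (x 1) = 4/5 := by simpa using hD 1
        have e2 : D (Y 0) = 1/5 := by simpa using hD 2
        rw [hyy, e0, e1, e2, show (1:ℝ) - 1/5 = 4/5 by norm_num,
          log45, log13, log23]
        linarith [log6251728]
      · -- four points
        obtain ⟨D, hc, hr, hD⟩ := interp ![x 0, x 1, Y 0, Y 1]
          (inj4 hx (fun h => h0 h.symm) (fun h => h1 h.symm)
            (fun h => hY0x1 h.symm) (fun h => hY1x1 h.symm) (fun h => hyy h.symm))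
          ![4/5, 4/5, 1/5, 1/5] (fun i => by fin_cases i <;> norm_num)
        apply key _ (elem Y D hc hr)
        have e0 : D (x 0) = 4/5 := by simpa using hD 0
        have e1 : D (x 1) = 4/5 := by simpa using hD 1
        have e2 : D (Y 0) = 1/5 := by simpa using hD 2
        have e3 : D (Y 1) = 1/5 := by simpa using hD 3
        rw [e0, e1, e2, e3, show (1:ℝ) - 1/5 = 4/5 by norm_num,
          log45, log13, log23]
        linarith [log6251728]
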